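/- arXiv:2205.15466 — 4 statements merged into one kernel-verified Lean document; each statement's English description precedes it below -/
import Mathlib

section
/- For any weight function w : {1,...,n} → ℝ with ∑_{k=1}^{n} C(n-1,k-1)·w(k) = n, and for the semivalue φ(i;U,w) := ∑_{k=1}^{n} (w(k)/n) ∑_{S ⊆ N\{i}, |S|=k-1} (U(S∪{i}) − U(S)), the scaled difference between two points i ≠ j satisfies n(φ(i;U,w) − φ(j;U,w)) = ∑_{k=1}^{n-1} (w(k)+w(k+1)) ∑_{S ⊆ N\{i,j}, |S|=k-1} (U(S∪{i}) − U(S∪{j})). -/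
open Finset

/-- The semivalue with weight function `w` of data point `i` w.r.t. utility `U`:
`φ(i;U,w) = ∑_{k=1}^{n} (w(k)/n) ∑_{S ⊆ N\{i}, |S|=k-1} (U(S∪{i}) − U(S))`. -/
noncomputable def semivalue (n : ℕ) (w : ℕ → ℝ) (U : Finset (Fin n) → ℝ) (i : Fin n) : ℝ :=
  ∑ k ∈ Finset.Icc 1 n, (w k / n) *
    ∑ S ∈ (Finset.univ.erase i).powerset.filter (fun S => S.card = k - 1),
      (U (insert i S) - U S)

theorem semivalue_scaled_difference (n : ℕ) (hn : 2 ≤ n) (w : ℕ → ℝ)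
    (hw : ∑ k ∈ Finset.Icc 1 n, (Nat.choose (n - 1) (k - 1) : ℝ) * w k = n)
    (U : Finset (Fin n) → ℝ) (i j : Fin n) (hij : i ≠ j) :
    (n : ℝ) * (semivalue n w U i - semivalue n w U j) =
      ∑ k ∈ Finset.Icc 1 (n - 1), (w k + w (k + 1)) *
        ∑ S ∈ ((Finset.univ.erase i).erase j).powerset.filter (fun S => S.card = k - 1),
          (U (insert i S) - U (insert j S)) := by
  classical
  have hn0 : (n : ℝ) ≠ 0 := by
    have : 0 < n := lt_of_lt_of_le (by norm_num) hn
    exact_mod_cast this.ne'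
  set B := (Finset.univ.erase i).erase j with hBdef
  have hjB : j ∉ B := notMem_erase _ _
  have hiB : i ∉ B := by
    intro h
    exact notMem_erase i Finset.univ (mem_of_mem_erase h)
  have hEi : Finset.univ.erase i = insert j B :=
    (insert_erase (by simp [mem_erase, hij.symm])).symm
  have hEj : Finset.univ.erase j = insert i B := by
    rw [hBdef, ← erase_right_comm]
    exact (insert_erase (by simp [mem_erase, hij])).symm
  -- the difference sums
  set d : ℕ → ℝ := fun m =>
    ∑ S ∈ B.powerset.filter (fun S => S.card = m), (U (insert i S) - U (insert j S)) with hd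
  -- splitting lemma
  have key : ∀ (x : Fin n), x ∉ B → ∀ (m : ℕ) (g : Finset (Fin n) → ℝ),
      ∑ S ∈ (insert x B).powerset.filter (fun S => S.card = m + 1), g S =
        ∑ S ∈ B.powerset.filter (fun S => S.card = m + 1), g S +
          ∑ S ∈ B.powerset.filter (fun S => S.card = m), g (insert x S) := by
    intro x hx m g
    rw [← powersetCard_eq_filter, ← powersetCard_eq_filter, ← powersetCard_eq_filter,
      powersetCard_succ_insert hx, sum_union, sum_image]
    · intro S hS T hT hST
      have hxS : x ∉ S := fun h => hx ((mem_powersetCard.mp hS).1 h)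
      have hxT : x ∉ T := fun h => hx ((mem_powersetCard.mp hT).1 h)
      rw [← erase_insert hxS, ← erase_insert hxT, hST]
    · rw [disjoint_left]
      intro S hS hS'
      rcases mem_image.mp hS' with ⟨T, hT, rfl⟩
      exact ((mem_powersetCard.mp hS).1 (mem_insert_self x T)) |> hx
  -- per-k identity
  have hk : ∀ k ∈ Finset.Icc 1 n,
      (∑ S ∈ (Finset.univ.erase i).powerset.filter (fun S => S.card = k - 1),
          (U (insert i S) - U S)) -
        (∑ S ∈ (Finset.univ.erase j).powerset.filter (fun S => S.card = k - 1),
          (U (insert j S) - U S)) =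
      d (k - 1) + (if k = 1 then 0 else d (k - 2)) := by
    intro k hkmem
    have hk1 : 1 ≤ k := (mem_Icc.mp hkmem).1
    rcases Nat.exists_eq_add_of_le hk1 with ⟨m, rfl⟩
    cases m with
    | zero =>
      have h0 : ∀ s : Finset (Fin n),
          s.powerset.filter (fun S => S.card = 0) = {∅} := by
        intro s
        ext t
        simp only [mem_filter, mem_powerset, mem_singleton, card_eq_zero,
          and_iff_right_iff_imp]
        rintro rfl
        exact empty_subset _
      simp only [Nat.add_zero, Nat.sub_self, if_pos rfl, hd, h0]
      simp
    | succ m =>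
      have e1 : (1 + (m + 1)) - 1 = m + 1 := by omega
      have e2 : (1 + (m + 1)) - 2 = m := by omega
      have hne : ¬ (1 + (m + 1) = 1) := by omega
      rw [e1, e2, if_neg hne, hEi, hEj, key j hjB m, key i hiB m]
      have hcm : ∀ S : Finset (Fin n), insert j (insert i S) = insert i (insert j S) :=
        fun S => Finset.insert_comm j i S
      simp only [hcm, hd]
      have h1 : (∑ S ∈ B.powerset.filter (fun S => S.card = m + 1), (U (insert i S) - U S)) -
          (∑ S ∈ B.powerset.filter (fun S => S.card = m + 1), (U (insert j S) - U S)) =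
          ∑ S ∈ B.powerset.filter (fun S => S.card = m + 1),
            (U (insert i S) - U (insert j S)) := by
        rw [← sum_sub_distrib]
        exact sum_congr rfl fun S _ => by ring
      have h2 : (∑ S ∈ B.powerset.filter (fun S => S.card = m),
            (U (insert i (insert j S)) - U (insert j S))) -
          (∑ S ∈ B.powerset.filter (fun S => S.card = m),
            (U (insert i (insert j S)) - U (insert i S))) =
          ∑ S ∈ B.powerset.filter (fun S => S.card = m),
            (U (insert i S) - U (insert j S)) := by
        rw [← sum_sub_distrib]
        exact sum_congr rfl fun S _ => by ring
      linarith [h1, h2]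
  -- main computation
  have main : (n : ℝ) * (semivalue n w U i - semivalue n w U j) =
      ∑ k ∈ Finset.Icc 1 n, w k * (d (k - 1) + (if k = 1 then 0 else d (k - 2))) := by
    unfold semivalue
    rw [← sum_sub_distrib, mul_sum]
    refine sum_congr rfl fun k hkmem => ?_
    rw [← hk k hkmem]
    field_simp
  rw [main]
  -- split the sum
  have split : ∑ k ∈ Finset.Icc 1 n, w k * (d (k - 1) + (if k = 1 then 0 else d (k - 2))) =
      (∑ k ∈ Finset.Icc 1 n, w k * d (k - 1)) +
        ∑ k ∈ Finset.Icc 2 n, w k * d (k - 2) := by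
    have hterm : ∀ k ∈ Finset.Icc 1 n,
        w k * (d (k - 1) + (if k = 1 then 0 else d (k - 2))) =
          w k * d (k - 1) + (if k = 1 then 0 else w k * d (k - 2)) := by
      intro k _
      split_ifs <;> ring
    rw [sum_congr rfl hterm, sum_add_distrib]
    congr 1
    rw [show Finset.Icc 1 n = insert 1 (Finset.Icc 2 n) by
      ext x; simp only [mem_insert, mem_Icc]; omega]
    rw [sum_insert (by simp), if_pos rfl, zero_add]
    exact sum_congr rfl fun k hkmem =>
      if_neg (by have := (mem_Icc.mp hkmem).1; omega)
  rw [split]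
  -- d (n-1) = 0
  have hBcard : B.card = n - 2 := by
    rw [hBdef, card_erase_of_mem (by simp [mem_erase, hij.symm]), card_erase_of_mem (by simp)]
    simp only [card_univ, Fintype.card_fin]
    omega
  have hdtop : d (n - 1) = 0 := by
    rw [hd]
    have : B.powerset.filter (fun S => S.card = n - 1) = ∅ := by
      rw [eq_empty_iff_forall_notMem]
      intro S hS
      rcases mem_filter.mp hS with ⟨hS1, hS2⟩
      have := card_le_card (mem_powerset.mp hS1)
      omega
    simp [this]
  have first : ∑ k ∈ Finset.Icc 1 n, w k * d (k - 1) =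
      ∑ k ∈ Finset.Icc 1 (n - 1), w k * d (k - 1) := by
    rw [show Finset.Icc 1 n = insert n (Finset.Icc 1 (n - 1)) by
      ext x; simp only [mem_insert, mem_Icc]; omega]
    rw [sum_insert (by simp only [mem_Icc]; omega), hdtop]
    ring
  have second : ∑ k ∈ Finset.Icc 2 n, w k * d (k - 2) =
      ∑ k ∈ Finset.Icc 1 (n - 1), w (k + 1) * d (k - 1) := by
    rw [show Finset.Icc 2 n = (Finset.Icc 1 (n - 1)).map ⟨fun k => k + 1, add_left_injective 1⟩ by
      ext x; simp only [mem_map, mem_Icc, Function.Embedding.coeFn_mk]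
      constructor
      · intro h; exact ⟨x - 1, by omega, by omega⟩
      · rintro ⟨y, hy, rfl⟩; omega]
    rw [sum_map]
    refine sum_congr rfl fun k hkmem => ?_
    simp only [Function.Embedding.coeFn_mk]
    congr 2 <;> omega
  rw [first, second, ← sum_add_distrib]
  exact sum_congr rfl fun k _ => by rw [hd]; ring
end

section
/- Let U : 2^N → [0,1], and for samples S₁,...,Sₘ define S⁺ = {t : i ∈ Sₜ} and S⁻ = {t : i ∉ Sₜ}, with |S⁺|, |S⁻| > 0 and |S⁺| + |S⁻| = m. Let φ̂(i) = (1/|S⁺|)∑_{t∈S⁺}U(Sₜ) − (1/|S⁻|)∑_{t∈S⁻}U(Sₜ) and φ̃(i) = (2/m)∑_{t∈S⁺}U(Sₜ) − (2/m)∑_{t∈S⁻}U(Sₜ). Then |φ̂(i) − φ̃(i)| ≤ (4/m)·| |S⁺| − m/2 |. -/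
open Finset

lemma msr_aux (A a m : ℝ) (ha : 0 < a) (hm : 0 < m) (hA0 : 0 ≤ A) (hA : A ≤ a) :
    |A / a - 2 / m * A| ≤ 2 / m * |a - m / 2| := by
  have e : A / a - 2 / m * A = (A / a) * ((m - 2 * a) / m) := by
    field_simp
  rw [e, abs_mul]
  have h1 : |A / a| ≤ 1 := by
    rw [abs_of_nonneg (div_nonneg hA0 ha.le)]
    exact (div_le_one ha).2 hA
  have h2 : |(m - 2 * a) / m| = 2 / m * |a - m / 2| := by
    rw [abs_div, abs_of_pos hm, show m - 2 * a = (-2) * (a - m / 2) by ring, abs_mul]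
    rw [show |(-2 : ℝ)| = 2 by norm_num]
    ring
  calc |A / a| * |(m - 2 * a) / m| ≤ 1 * |(m - 2 * a) / m| :=
        mul_le_mul_of_nonneg_right h1 (abs_nonneg _)
    _ = 2 / m * |a - m / 2| := by rw [one_mul, h2]

/-- Deterministic comparison between the MSR estimator (normalizing by the actual counts
`|S⁺|, |S⁻|`) and its idealized version (normalizing by `m/2`). -/
theorem msr_vs_idealized (n m : ℕ) (U : Finset (Fin n) → ℝ)
    (hU : ∀ S, U S ∈ Set.Icc (0 : ℝ) 1) (S : Fin m → Finset (Fin n)) (i : Fin n)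
    (hplus : (Finset.filter (fun t => i ∈ S t) Finset.univ).Nonempty)
    (hminus : (Finset.filter (fun t => i ∉ S t) Finset.univ).Nonempty) :
    |((∑ t ∈ Finset.filter (fun t => i ∈ S t) Finset.univ, U (S t)) /
          ((Finset.filter (fun t => i ∈ S t) Finset.univ).card : ℝ) -
        (∑ t ∈ Finset.filter (fun t => i ∉ S t) Finset.univ, U (S t)) /
          ((Finset.filter (fun t => i ∉ S t) Finset.univ).card : ℝ)) -
      ((2 / (m : ℝ)) * (∑ t ∈ Finset.filter (fun t => i ∈ S t) Finset.univ, U (S t)) -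
        (2 / (m : ℝ)) * (∑ t ∈ Finset.filter (fun t => i ∉ S t) Finset.univ, U (S t)))| ≤
      (4 / (m : ℝ)) * |((Finset.filter (fun t => i ∈ S t) Finset.univ).card : ℝ) - (m : ℝ) / 2| := by
  set P := Finset.filter (fun t => i ∈ S t) (Finset.univ : Finset (Fin m)) with hP
  set Q := Finset.filter (fun t => i ∉ S t) (Finset.univ : Finset (Fin m)) with hQ
  set A := ∑ t ∈ P, U (S t) with hAdef
  set B := ∑ t ∈ Q, U (S t) with hBdef
  have ha : (0 : ℝ) < P.card := by exact_mod_cast Finset.card_pos.2 hplus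
  have hb : (0 : ℝ) < Q.card := by exact_mod_cast Finset.card_pos.2 hminus
  have hcard : P.card + Q.card = m := by
    rw [hP, hQ]
    rw [Finset.card_filter_add_card_filter_not]
    exact Finset.card_univ.trans (Fintype.card_fin m)
  have hm : (0 : ℝ) < m := by
    have : 0 < m := by
      rcases hplus with ⟨t, _⟩; exact t.pos
    exact_mod_cast this
  have hA0 : 0 ≤ A := Finset.sum_nonneg fun t _ => (hU (S t)).1
  have hAle : A ≤ P.card := by
    calc A ≤ ∑ t ∈ P, (1 : ℝ) := Finset.sum_le_sum fun t _ => (hU (S t)).2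
      _ = P.card := by simp
  have hB0 : 0 ≤ B := Finset.sum_nonneg fun t _ => (hU (S t)).1
  have hBle : B ≤ Q.card := by
    calc B ≤ ∑ t ∈ Q, (1 : ℝ) := Finset.sum_le_sum fun t _ => (hU (S t)).2
      _ = Q.card := by simp
  have key : (A / P.card - B / Q.card) - (2 / (m : ℝ) * A - 2 / (m : ℝ) * B)
      = (A / P.card - 2 / (m : ℝ) * A) - (B / Q.card - 2 / (m : ℝ) * B) := by ring
  rw [key]
  have h1 := msr_aux A P.card m ha hm hA0 hAle
  have h2 := msr_aux B Q.card m hb hm hB0 hBle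
  have hq : |(Q.card : ℝ) - (m : ℝ) / 2| = |(P.card : ℝ) - (m : ℝ) / 2| := by
    have : (Q.card : ℝ) = m - P.card := by
      have := hcard
      push_cast [← this]
      ring
    rw [this, show (m : ℝ) - P.card - m / 2 = -((P.card : ℝ) - m / 2) by ring, abs_neg]
  calc |(A / P.card - 2 / (m : ℝ) * A) - (B / Q.card - 2 / (m : ℝ) * B)|
      ≤ |A / P.card - 2 / (m : ℝ) * A| + |B / Q.card - 2 / (m : ℝ) * B| := abs_sub _ _
    _ ≤ 2 / m * |(P.card : ℝ) - m / 2| + 2 / m * |(Q.card : ℝ) - m / 2| := add_le_add h1 h2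
    _ = 4 / m * |(P.card : ℝ) - m / 2| := by rw [hq]; ring
end

section
/- Let S_n ∈ ℝ^{n×2^n} be the semivalue matrix of a semivalue with weight w, with entries (S_n)_{i,S} = w(|S|)/n if i ∈ S and (S_n)_{i,S} = −w(|S|+1)/n if i ∉ S. Then S_n·S_nᵀ = (d₁ − d₂)·I_n + d₂·J_n, where d₁ = (2/n²)∑_{k=1}^{n} C(n-1,k-1)w(k)², d₂ = (1/n²)∑_{k=0}^{n-2} C(n-2,k)(w(k+2) − w(k+1))², I_n is the identity and J_n the all-ones matrix. -/
open Finset Matrix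

lemma sum_powerset_card' {α : Type*} [DecidableEq α] (s : Finset α) (g : ℕ → ℝ) :
    ∑ T ∈ s.powerset, g T.card = ∑ k ∈ Finset.range (s.card + 1), (s.card.choose k : ℝ) * g k := by
  rw [Finset.sum_powerset]
  refine Finset.sum_congr rfl fun k _ => ?_
  rw [Finset.sum_congr rfl (fun T hT => by rw [(Finset.mem_powersetCard.mp hT).2] : ∀ T ∈ Finset.powersetCard k s, g T.card = g k)]
  simp [Finset.card_powersetCard, mul_comm]

/-- The semivalue matrix `S_n` with entries `w(|S|)/n` if `i ∈ S` and `−w(|S|+1)/n` if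
`i ∉ S` satisfies `S_n·S_nᵀ = (d₁ − d₂)·I + d₂·J`. -/
theorem semivalue_matrix_gram (n : ℕ) (hn : 2 ≤ n) (w : ℕ → ℝ) :
    let M : Matrix (Fin n) (Finset (Fin n)) ℝ :=
      Matrix.of fun i S => if i ∈ S then w S.card / n else -(w (S.card + 1)) / n
    let d₁ : ℝ :=
      (2 / (n : ℝ) ^ 2) * ∑ k ∈ Finset.Icc 1 n, (Nat.choose (n - 1) (k - 1) : ℝ) * w k ^ 2
    let d₂ : ℝ :=
      (1 / (n : ℝ) ^ 2) *
        ∑ k ∈ Finset.range (n - 1), (Nat.choose (n - 2) k : ℝ) * (w (k + 2) - w (k + 1)) ^ 2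
    M * Mᵀ = (d₁ - d₂) • (1 : Matrix (Fin n) (Fin n) ℝ) + d₂ • Matrix.of fun _ _ => (1 : ℝ) := by
  intro M d₁ d₂
  have hd₁ : d₁ = (2 / (n : ℝ) ^ 2) * ∑ k ∈ Finset.range n, (Nat.choose (n - 1) k : ℝ) * w (k + 1) ^ 2 := by
    show (2 / (n : ℝ) ^ 2) * _ = _
    congr 1
    rw [← Finset.Ico_add_one_right_eq_Icc, Finset.sum_Ico_eq_sum_range]
    simp [add_comm]
  ext i j
  rw [Matrix.mul_apply]
  simp only [Matrix.transpose_apply, Matrix.add_apply, Matrix.smul_apply, Matrix.of_apply,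
    smul_eq_mul, mul_one]
  rw [show (Finset.univ : Finset (Finset (Fin n))) = (Finset.univ : Finset (Fin n)).powerset from
    Finset.powerset_univ.symm]
  by_cases hij : i = j
  · subst hij
    rw [Matrix.one_apply_eq]
    rw [show (Finset.univ : Finset (Fin n)) = insert i (Finset.univ.erase i) from
      (Finset.insert_erase (Finset.mem_univ i)).symm]
    rw [Finset.sum_powerset_insert (Finset.notMem_erase i _)]
    have hcard : (Finset.univ.erase i).card = n - 1 := by
      rw [Finset.card_erase_of_mem (Finset.mem_univ i), Finset.card_univ, Fintype.card_fin]
    have h1 : ∀ T ∈ (Finset.univ.erase i).powerset,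
        M i T * M i T = w (T.card + 1) ^ 2 / (n : ℝ) ^ 2 := by
      intro T hT
      have hiT : i ∉ T := fun h => Finset.notMem_erase i _ (Finset.mem_powerset.mp hT h)
      simp only [M, Matrix.of_apply, if_neg hiT]
      ring
    have h2 : ∀ T ∈ (Finset.univ.erase i).powerset,
        M i (insert i T) * M i (insert i T) = w (T.card + 1) ^ 2 / (n : ℝ) ^ 2 := by
      intro T hT
      have hiT : i ∉ T := fun h => Finset.notMem_erase i _ (Finset.mem_powerset.mp hT h)
      simp only [M, Matrix.of_apply, if_pos (Finset.mem_insert_self i T),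
        Finset.card_insert_of_notMem hiT]
      ring
    have hs1 : ∑ T ∈ (Finset.univ.erase i).powerset, w (T.card + 1) ^ 2 / (n : ℝ) ^ 2 =
        ∑ k ∈ Finset.range ((Finset.univ.erase i).card + 1),
          (((Finset.univ.erase i).card.choose k : ℝ)) * (w (k + 1) ^ 2 / (n : ℝ) ^ 2) :=
      sum_powerset_card' _ (fun k => w (k + 1) ^ 2 / (n : ℝ) ^ 2)
    have e1 : ∑ T ∈ (Finset.univ.erase i).powerset, M i T * M i T =
        ∑ T ∈ (Finset.univ.erase i).powerset, w (T.card + 1) ^ 2 / (n : ℝ) ^ 2 :=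
      Finset.sum_congr rfl h1
    have e2 : ∑ T ∈ (Finset.univ.erase i).powerset, M i (insert i T) * M i (insert i T) =
        ∑ T ∈ (Finset.univ.erase i).powerset, w (T.card + 1) ^ 2 / (n : ℝ) ^ 2 :=
      Finset.sum_congr rfl h2
    have hrange : n - 1 + 1 = n := by omega
    rw [e1, e2, hs1, hcard, hrange,
      show (d₁ - d₂) * 1 + d₂ = d₁ from by ring, hd₁, ← two_mul, Finset.mul_sum, Finset.mul_sum]
    exact Finset.sum_congr rfl fun k _ => by ring
  · rw [Matrix.one_apply_ne hij]
    have hji : j ∈ Finset.univ.erase i := Finset.mem_erase.mpr ⟨Ne.symm hij, Finset.mem_univ j⟩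
    set u : Finset (Fin n) := (Finset.univ.erase i).erase j with hu
    have hcard : u.card = n - 2 := by
      rw [hu, Finset.card_erase_of_mem hji, Finset.card_erase_of_mem (Finset.mem_univ i),
        Finset.card_univ, Fintype.card_fin]
      omega
    have hiu : i ∉ insert j u := by
      simp [hu, Finset.mem_insert, hij]
    have hju : j ∉ u := Finset.notMem_erase j _
    rw [show (Finset.univ : Finset (Fin n)) = insert i (insert j u) from by
      rw [hu, Finset.insert_erase hji, Finset.insert_erase (Finset.mem_univ i)]]
    rw [Finset.sum_powerset_insert hiu, Finset.sum_powerset_insert hju,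
      Finset.sum_powerset_insert hju]
    have key : ∀ U ∈ u.powerset,
        M i U * M j U + M i (insert j U) * M j (insert j U)
          + (M i (insert i U) * M j (insert i U)
          + M i (insert i (insert j U)) * M j (insert i (insert j U)))
        = (w (U.card + 2) - w (U.card + 1)) ^ 2 / (n : ℝ) ^ 2 := by
      intro U hU
      have hUu : U ⊆ u := Finset.mem_powerset.mp hU
      have hjU : j ∉ U := fun h => hju (hUu h)
      have hiU : i ∉ U := fun h => hiu (Finset.mem_insert_of_mem (hUu h))
      have hijU : i ∉ insert j U := by
        simp [Finset.mem_insert, hij, hiU]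
      have hjiU : j ∉ insert i U := by
        simp [Finset.mem_insert, Ne.symm hij, hjU]
      simp only [M, Matrix.of_apply, if_neg hiU, if_neg hjU, if_neg hijU, if_neg hjiU,
        if_pos (Finset.mem_insert_self j U), if_pos (Finset.mem_insert_self i U),
        if_pos (Finset.mem_insert_self i (insert j U)),
        if_pos (Finset.mem_insert_of_mem (Finset.mem_insert_self j U) : j ∈ insert i (insert j U)),
        Finset.card_insert_of_notMem hjU, Finset.card_insert_of_notMem hiU,
        Finset.card_insert_of_notMem hijU, Finset.card_insert_of_notMem hjU]
      ring
    have hs2 : ∑ U ∈ u.powerset, (w (U.card + 2) - w (U.card + 1)) ^ 2 / (n : ℝ) ^ 2 =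
        ∑ k ∈ Finset.range (u.card + 1),
          ((u.card.choose k : ℝ)) * ((w (k + 2) - w (k + 1)) ^ 2 / (n : ℝ) ^ 2) :=
      sum_powerset_card' _ (fun k => (w (k + 2) - w (k + 1)) ^ 2 / (n : ℝ) ^ 2)
    have ekey : ∑ U ∈ u.powerset, (M i U * M j U + M i (insert j U) * M j (insert j U)
          + (M i (insert i U) * M j (insert i U)
          + M i (insert i (insert j U)) * M j (insert i (insert j U)))) =
        ∑ U ∈ u.powerset, (w (U.card + 2) - w (U.card + 1)) ^ 2 / (n : ℝ) ^ 2 :=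
      Finset.sum_congr rfl key
    have hrange : n - 2 + 1 = n - 1 := by omega
    have hd₂ : d₂ = (1 / (n : ℝ) ^ 2) *
        ∑ k ∈ Finset.range (n - 1), (Nat.choose (n - 2) k : ℝ) * (w (k + 2) - w (k + 1)) ^ 2 := rfl
    rw [← Finset.sum_add_distrib, ← Finset.sum_add_distrib, ← Finset.sum_add_distrib,
      ekey, hs2, hcard, hrange, show (d₁ - d₂) * 0 + d₂ = d₂ from by ring, hd₂, Finset.mul_sum]
    exact Finset.sum_congr rfl fun k _ => by ring
end

section
/- The Banzhaf value map U ↦ φ_banz(·;U), viewed as a linear map ℝ^{2^n} → ℝ^n, has operator norm (with respect to Euclidean norms) equal to 2^{-(n/2 - 1)}; i.e., ‖φ_banz(·;U) − φ_banz(·;Û)‖₂ ≤ 2^{-(n/2-1)}·‖U − Û‖₂ for all U, Û, and this Lipschitz constant is tight. Moreover, among all semivalues (weight functions w with ∑_{k=1}^n C(n-1,k-1)w(k) = n), the Banzhaf value achieves the smallest such Lipschitz constant. -/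
open Finset

/-- The Banzhaf value. -/
noncomputable def banzhaf (n : ℕ) (U : Finset (Fin n) → ℝ) (i : Fin n) : ℝ :=
  (1 / 2 ^ (n - 1)) * ∑ S ∈ (Finset.univ.erase i).powerset, (U (insert i S) - U S)

/-- Euclidean norm on `ι → ℝ`. -/
noncomputable def euclidNorm {ι : Type*} [Fintype ι] (v : ι → ℝ) : ℝ :=
  Real.sqrt (∑ t, v t ^ 2)

noncomputable def eps (n : ℕ) (i : Fin n) (T : Finset (Fin n)) : ℝ := if i ∈ T then 1 else -1

lemma sum_split {n : ℕ} (i : Fin n) (g : Finset (Fin n) → ℝ) :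
    ∑ T : Finset (Fin n), g T
      = ∑ S ∈ ((Finset.univ : Finset (Fin n)).erase i).powerset, (g S + g (insert i S)) := by
  have h1 : (Finset.univ : Finset (Finset (Fin n))) = (Finset.univ : Finset (Fin n)).powerset :=
    (Finset.powerset_univ).symm
  rw [h1]
  conv_lhs => rw [← Finset.insert_erase (Finset.mem_univ i)]
  rw [Finset.sum_powerset_insert (Finset.notMem_erase i _)]
  rw [← Finset.sum_add_distrib]

lemma eps_ortho {n : ℕ} (i j : Fin n) :
    ∑ T : Finset (Fin n), eps n i T * eps n j T = if i = j then (2:ℝ)^n else 0 := by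
  rcases eq_or_ne i j with rfl | hij
  · rw [if_pos rfl]
    have h : ∀ T : Finset (Fin n), eps n i T * eps n i T = 1 := by
      intro T; unfold eps; split <;> norm_num
    rw [Finset.sum_congr rfl (fun T _ => h T), Finset.sum_const, card_univ,
      Fintype.card_finset, Fintype.card_fin]
    simp
  · rw [if_neg hij, sum_split i]
    apply Finset.sum_eq_zero
    intro S hS
    have hiS : i ∉ S := fun h => Finset.notMem_erase i _ (Finset.mem_powerset.mp hS h)
    have hj1 : eps n j (insert i S) = eps n j S := by
      unfold eps
      simp [Finset.mem_insert, (Ne.symm hij : j ≠ i)]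
    have h1 : eps n i S = -1 := by unfold eps; simp [hiS]
    have h2 : eps n i (insert i S) = 1 := by unfold eps; simp
    rw [hj1, h1, h2]; ring

lemma banzhaf_flip {n : ℕ} (i : Fin n) (W : Finset (Fin n) → ℝ) :
    ∑ S ∈ ((Finset.univ : Finset (Fin n)).erase i).powerset, (W (insert i S) - W S)
      = ∑ T : Finset (Fin n), eps n i T * W T := by
  rw [sum_split i]
  apply Finset.sum_congr rfl
  intro S hS
  have hiS : i ∉ S := fun h => Finset.notMem_erase i _ (Finset.mem_powerset.mp hS h)
  have h1 : eps n i S = -1 := by unfold eps; simp [hiS]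
  have h2 : eps n i (insert i S) = 1 := by unfold eps; simp
  rw [h1, h2]; ring

lemma bessel {n : ℕ} (W : Finset (Fin n) → ℝ) :
    ∑ i : Fin n, (∑ T : Finset (Fin n), eps n i T * W T)^2
      ≤ 2^n * ∑ T : Finset (Fin n), W T ^ 2 := by
  set c : Fin n → ℝ := fun i => ∑ T : Finset (Fin n), eps n i T * W T with hc
  have S1 : ∑ T : Finset (Fin n), (∑ i : Fin n, c i * eps n i T) * W T = ∑ i : Fin n, c i ^ 2 := by
    have h : ∀ T : Finset (Fin n), (∑ i : Fin n, c i * eps n i T) * W T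
        = ∑ i : Fin n, c i * (eps n i T * W T) := by
      intro T; rw [Finset.sum_mul]; apply Finset.sum_congr rfl; intros; ring
    rw [Finset.sum_congr rfl fun T _ => h T, Finset.sum_comm]
    apply Finset.sum_congr rfl
    intro i _
    rw [← Finset.mul_sum]
    have : (∑ T : Finset (Fin n), eps n i T * W T) = c i := rfl
    rw [this, sq]
  have S2 : ∑ T : Finset (Fin n), (∑ i : Fin n, c i * eps n i T)^2 = 2^n * ∑ i : Fin n, c i ^ 2 := by
    have e1 : ∀ T : Finset (Fin n), (∑ i : Fin n, c i * eps n i T)^2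
        = ∑ i : Fin n, ∑ j : Fin n, (c i * c j) * (eps n i T * eps n j T) := by
      intro T
      rw [sq, Finset.sum_mul_sum]
      apply Finset.sum_congr rfl; intro i _
      apply Finset.sum_congr rfl; intro j _
      ring
    rw [Finset.sum_congr rfl fun T _ => e1 T, Finset.sum_comm]
    have e2 : ∀ i : Fin n, ∑ T : Finset (Fin n), ∑ j : Fin n, (c i * c j) * (eps n i T * eps n j T)
        = 2^n * c i ^ 2 := by
      intro i
      rw [Finset.sum_comm]
      have e3 : ∀ j : Fin n, ∑ T : Finset (Fin n), (c i * c j) * (eps n i T * eps n j T)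
          = (c i * c j) * (if i = j then (2:ℝ)^n else 0) := by
        intro j
        rw [← Finset.mul_sum, eps_ortho]
      rw [Finset.sum_congr rfl fun j _ => e3 j]
      simp only [mul_ite, mul_zero, Finset.sum_ite_eq, Finset.mem_univ, if_pos]
      ring
    rw [Finset.sum_congr rfl fun i _ => e2 i, ← Finset.mul_sum]
  have hE : (0:ℝ) ≤ ∑ T : Finset (Fin n), ((2:ℝ)^n * W T - ∑ i : Fin n, c i * eps n i T)^2 :=
    Finset.sum_nonneg fun _ _ => sq_nonneg _
  have hEe : ∑ T : Finset (Fin n), ((2:ℝ)^n * W T - ∑ i : Fin n, c i * eps n i T)^2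
      = (2:ℝ)^n * ((2:ℝ)^n * ∑ T : Finset (Fin n), W T^2) - 2 * 2^n * (∑ i : Fin n, c i^2)
        + 2^n * ∑ i : Fin n, c i^2 := by
    have h : ∀ T : Finset (Fin n), ((2:ℝ)^n * W T - ∑ i : Fin n, c i * eps n i T)^2
        = (2:ℝ)^n * ((2:ℝ)^n * W T^2) - 2*2^n * ((∑ i : Fin n, c i * eps n i T) * W T)
          + (∑ i : Fin n, c i * eps n i T)^2 := by
      intro T; ring
    rw [Finset.sum_congr rfl fun T _ => h T, Finset.sum_add_distrib, Finset.sum_sub_distrib,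
      ← Finset.mul_sum, ← Finset.mul_sum, ← Finset.mul_sum, S1, S2]
  rw [hEe] at hE
  have h2n : (0:ℝ) < 2^n := by positivity
  nlinarith [hE, h2n]

-- rpow facts
lemma rpow_sq_eq {n : ℕ} (hn : 1 ≤ n) :
    ((1:ℝ)/2^(n-1))^2 * 2^n = ((2:ℝ) ^ (-((n : ℝ) / 2 - 1)))^2 := by
  have hpow : (2:ℝ)^n = 2 * 2^(n-1) := by
    conv_lhs => rw [show n = (n-1)+1 from (Nat.sub_add_cancel hn).symm]
    rw [pow_succ]; ring
  have hr2 : ((2:ℝ) ^ (-((n : ℝ) / 2 - 1)))^2 = (2:ℝ) ^ ((2:ℝ) - n) := by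
    rw [← Real.rpow_natCast ((2:ℝ) ^ (-((n : ℝ) / 2 - 1))) 2, ← Real.rpow_mul (by norm_num)]
    norm_num
    ring_nf
  have h4 : (2:ℝ) ^ ((2:ℝ) - n) = 4 / 2^n := by
    rw [Real.rpow_sub (by norm_num), Real.rpow_natCast]
    norm_num
  rw [hr2, h4]
  have h2 : ((2:ℝ)^(n-1)) ≠ 0 := by positivity
  have h2' : ((2:ℝ)^n) ≠ 0 := by positivity
  field_simp
  rw [hpow]; ring

lemma sqrt_two_pow {n : ℕ} : Real.sqrt ((2:ℝ)^n) = (2:ℝ) ^ ((n:ℝ)/2) := by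
  rw [show ((2:ℝ)^n) = (2:ℝ) ^ ((n:ℕ):ℝ) from (Real.rpow_natCast 2 n).symm,
    Real.sqrt_eq_rpow, ← Real.rpow_mul (by norm_num)]
  ring_nf

lemma r_mul_sqrt {n : ℕ} :
    (2:ℝ) ^ (-((n : ℝ) / 2 - 1)) * Real.sqrt ((2:ℝ)^n) = 2 := by
  rw [sqrt_two_pow, ← Real.rpow_add (by norm_num)]
  norm_num

lemma banzhaf_eps {n : ℕ} (hn : 1 ≤ n) (i0 i : Fin n) :
    banzhaf n (eps n i0) i = if i = i0 then 2 else 0 := by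
  unfold banzhaf
  rw [banzhaf_flip, eps_ortho i i0]
  have hpow : (2:ℝ)^n = 2 * 2^(n-1) := by
    conv_lhs => rw [show n = (n-1)+1 from (Nat.sub_add_cancel hn).symm]
    rw [pow_succ]; ring
  have h2 : ((2:ℝ)^(n-1)) ≠ 0 := by positivity
  split
  · rw [hpow]; field_simp
  · simp

lemma semivalue_zero {n : ℕ} (w : ℕ → ℝ) (i : Fin n) : semivalue n w (fun _ => 0) i = 0 := by
  simp [semivalue]

lemma semivalue_eps {n : ℕ} (hn : 1 ≤ n) (w : ℕ → ℝ)
    (hw : ∑ k ∈ Finset.Icc 1 n, (Nat.choose (n - 1) (k - 1) : ℝ) * w k = n) (i0 i : Fin n) :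
    semivalue n w (eps n i0) i = if i = i0 then 2 else 0 := by
  have hn0 : (n:ℝ) ≠ 0 := Nat.cast_ne_zero.mpr (by omega)
  rcases eq_or_ne i i0 with rfl | h
  · rw [if_pos rfl]
    unfold semivalue
    have inner : ∀ k : ℕ,
        ∑ S ∈ (Finset.univ.erase i).powerset.filter (fun S => S.card = k - 1),
          (eps n i (insert i S) - eps n i S) = 2 * ((n-1).choose (k-1) : ℝ) := by
      intro k
      have hterm : ∀ S ∈ (Finset.univ.erase i).powerset.filter (fun S => S.card = k - 1),
          eps n i (insert i S) - eps n i S = 2 := by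
        intro S hS
        have hiS : i ∉ S := fun h =>
          Finset.notMem_erase i _ (Finset.mem_powerset.mp (Finset.mem_filter.mp hS).1 h)
        have h1 : eps n i S = -1 := by unfold eps; simp [hiS]
        have h2 : eps n i (insert i S) = 1 := by unfold eps; simp
        rw [h1, h2]; norm_num
      rw [Finset.sum_congr rfl hterm, Finset.sum_const]
      have hcard : ((Finset.univ.erase i).powerset.filter (fun S => S.card = k - 1)).card
          = (n-1).choose (k-1) := by
        rw [← Finset.powersetCard_eq_filter, Finset.card_powersetCard,
          Finset.card_erase_of_mem (Finset.mem_univ i), Finset.card_univ, Fintype.card_fin]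
      rw [hcard, nsmul_eq_mul]; ring
    calc ∑ k ∈ Finset.Icc 1 n, (w k / n) *
          ∑ S ∈ (Finset.univ.erase i).powerset.filter (fun S => S.card = k - 1),
            (eps n i (insert i S) - eps n i S)
        = ∑ k ∈ Finset.Icc 1 n, (2 / n) * (((n-1).choose (k-1) : ℝ) * w k) := by
          apply Finset.sum_congr rfl
          intro k _
          rw [inner k]; ring
      _ = (2 / n) * ∑ k ∈ Finset.Icc 1 n, (((n-1).choose (k-1) : ℝ) * w k) := by
          rw [Finset.mul_sum]
      _ = 2 := by rw [hw]; field_simp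
  · rw [if_neg h]
    unfold semivalue
    apply Finset.sum_eq_zero
    intro k _
    have : ∑ S ∈ (Finset.univ.erase i).powerset.filter (fun S => S.card = k - 1),
        (eps n i0 (insert i S) - eps n i0 S) = 0 := by
      apply Finset.sum_eq_zero
      intro S _
      have : eps n i0 (insert i S) = eps n i0 S := by
        unfold eps
        simp [Finset.mem_insert, (Ne.symm h : i0 ≠ i)]
      rw [this, sub_self]
    rw [this, mul_zero]

lemma enorm_ite {n : ℕ} (i0 : Fin n) :
    euclidNorm (fun i : Fin n => if i = i0 then (2:ℝ) else 0) = 2 := by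
  unfold euclidNorm
  have h : ∀ i : Fin n, (if i = i0 then (2:ℝ) else 0)^2 = if i = i0 then 4 else 0 := by
    intro i; split <;> norm_num
  rw [Finset.sum_congr rfl fun i _ => h i,
    Finset.sum_ite_eq' Finset.univ i0 (fun _ => (4:ℝ)), if_pos (Finset.mem_univ i0),
    show (4:ℝ) = 2^2 by norm_num, Real.sqrt_sq (by norm_num)]

lemma enorm_eps_sub {n : ℕ} (i0 : Fin n) :
    euclidNorm (fun T => eps n i0 T - (fun _ => (0:ℝ)) T) = Real.sqrt ((2:ℝ)^n) := by
  unfold euclidNorm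
  congr 1
  have h : ∀ T : Finset (Fin n), (eps n i0 T - (fun _ => (0:ℝ)) T)^2 = 1 := by
    intro T; unfold eps; simp only [sub_zero]; split <;> norm_num
  rw [Finset.sum_congr rfl fun T _ => h T, Finset.sum_const, card_univ,
    Fintype.card_finset, Fintype.card_fin]
  simp

/-- The Banzhaf value map `U ↦ φ_banz(·;U)` is `2^{-(n/2-1)}`-Lipschitz with respect to
Euclidean norms, this constant is tight, and it is the smallest Lipschitz constant among
all semivalues. -/
theorem banzhaf_lipschitz_optimal (n : ℕ) (hn : 1 ≤ n) :
    (∀ U V : Finset (Fin n) → ℝ,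
      euclidNorm (fun i => banzhaf n U i - banzhaf n V i) ≤
        (2 : ℝ) ^ (-((n : ℝ) / 2 - 1)) * euclidNorm (fun S => U S - V S)) ∧
    (∃ U V : Finset (Fin n) → ℝ, U ≠ V ∧
      euclidNorm (fun i => banzhaf n U i - banzhaf n V i) =
        (2 : ℝ) ^ (-((n : ℝ) / 2 - 1)) * euclidNorm (fun S => U S - V S)) ∧
    (∀ w : ℕ → ℝ,
      (∑ k ∈ Finset.Icc 1 n, (Nat.choose (n - 1) (k - 1) : ℝ) * w k = n) →
      ∀ L : ℝ, 0 ≤ L →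
      (∀ U V : Finset (Fin n) → ℝ,
        euclidNorm (fun i => semivalue n w U i - semivalue n w V i) ≤
          L * euclidNorm (fun S => U S - V S)) →
      (2 : ℝ) ^ (-((n : ℝ) / 2 - 1)) ≤ L) := by
  set r : ℝ := (2 : ℝ) ^ (-((n : ℝ) / 2 - 1)) with hr
  have hrnn : 0 ≤ r := Real.rpow_nonneg (by norm_num) _
  have i0 : Fin n := ⟨0, hn⟩
  refine ⟨?_, ?_, ?_⟩
  · -- Lipschitz bound
    intro U V
    have hfun : (fun i => banzhaf n U i - banzhaf n V i)
        = fun i => (1/2^(n-1) : ℝ) * ∑ T : Finset (Fin n), eps n i T * (U T - V T) := by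
      funext i
      unfold banzhaf
      rw [← banzhaf_flip i (fun T => U T - V T), ← mul_sub, ← Finset.sum_sub_distrib]
      congr 1
      apply Finset.sum_congr rfl
      intros; ring
    rw [hfun]
    unfold euclidNorm
    have h1 : ∑ i : Fin n, ((1/2^(n-1) : ℝ) * ∑ T : Finset (Fin n), eps n i T * (U T - V T))^2
        = (1/2^(n-1) : ℝ)^2 * ∑ i : Fin n, (∑ T : Finset (Fin n), eps n i T * (U T - V T))^2 := by
      rw [Finset.mul_sum]
      apply Finset.sum_congr rfl
      intros; ring
    have h2 : (1/2^(n-1) : ℝ)^2 * ∑ i : Fin n, (∑ T : Finset (Fin n), eps n i T * (U T - V T))^2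
        ≤ r^2 * ∑ T : Finset (Fin n), (U T - V T)^2 := by
      have := mul_le_mul_of_nonneg_left (bessel (fun T => U T - V T)) (sq_nonneg (1/2^(n-1) : ℝ))
      calc (1/2^(n-1) : ℝ)^2 * ∑ i : Fin n, (∑ T : Finset (Fin n), eps n i T * (U T - V T))^2
          ≤ (1/2^(n-1) : ℝ)^2 * (2^n * ∑ T : Finset (Fin n), (U T - V T)^2) := this
        _ = ((1/2^(n-1) : ℝ)^2 * 2^n) * ∑ T : Finset (Fin n), (U T - V T)^2 := by ring
        _ = r^2 * ∑ T : Finset (Fin n), (U T - V T)^2 := by rw [rpow_sq_eq hn]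
    calc Real.sqrt (∑ i : Fin n, ((1/2^(n-1) : ℝ) * ∑ T : Finset (Fin n), eps n i T * (U T - V T))^2)
        ≤ Real.sqrt (r^2 * ∑ T : Finset (Fin n), (U T - V T)^2) := by
          apply Real.sqrt_le_sqrt
          rw [h1]; exact h2
      _ = r * Real.sqrt (∑ T : Finset (Fin n), (U T - V T)^2) := by
          rw [Real.sqrt_mul (sq_nonneg r), Real.sqrt_sq hrnn]
  · -- tightness
    refine ⟨eps n i0, fun _ => 0, ?_, ?_⟩
    · intro h
      have h2 := congrFun h ∅
      unfold eps at h2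
      simp at h2
    · have hfun : (fun i => banzhaf n (eps n i0) i - banzhaf n (fun _ => 0) i)
          = fun i => if i = i0 then (2:ℝ) else 0 := by
        funext i
        rw [banzhaf_eps hn]
        simp [banzhaf]
      rw [hfun, enorm_ite, enorm_eps_sub, r_mul_sqrt]
  · -- optimality
    intro w hw L hL0 hLip
    have h := hLip (eps n i0) (fun _ => 0)
    have hfun : (fun i => semivalue n w (eps n i0) i - semivalue n w (fun _ => 0) i)
        = fun i => if i = i0 then (2:ℝ) else 0 := by
      funext i
      rw [semivalue_eps hn w hw, semivalue_zero, sub_zero]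
    rw [hfun, enorm_ite, enorm_eps_sub, sqrt_two_pow] at h
    have hpos : (0:ℝ) < (2:ℝ) ^ ((n:ℝ)/2) := Real.rpow_pos_of_pos (by norm_num) _
    have hrp : r * (2:ℝ) ^ ((n:ℝ)/2) = 2 := by
      rw [hr, ← sqrt_two_pow, r_mul_sqrt]
    refine le_of_mul_le_mul_right ?_ hpos
    rw [hrp]
    exact h
end
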